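/- Let T^(N) be the depth-N truncation of a rooted tree with root o, interaction strengths J_w > 0 and inverse temperature β > 0, and fix a vertex v with |v| < N. Let P_v^(N) be the free-boundary Ising measure on the subtree T^(N)(v), let X_v^(N) be the log-likelihood ratio at v given the boundary configuration, and let Q_v^{N+} be the conditional law of the boundary configuration given η(v) = +1. Then for every odd function φ : ℝ → ℝ, ∫ φ(X_v^(N)) dQ_v^{N+} = ∫ φ(|X_v^(N)|) tanh(|X_v^(N)|/2) dP_v^(N), where on the right X_v^(N) is integrated against the law of the boundary configuration induced by P_v^(N). -/

import Mathlib

open scoped ENNReal Classical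

noncomputable section

/-- Vertices of the canonical rooted tree: finite sequences of naturals; the root is `[]`. -/
abbrev Vtx := List ℕ

/-- Vertices of the tree determined by the child-count function `c`. -/
inductive IsVtx (c : Vtx → ℕ) : Vtx → Prop
  | root : IsVtx c []
  | child {v : Vtx} {i : ℕ} : IsVtx c v → i < c v → IsVtx c (v ++ [i])

/-- A flow: conservation at every non-root, non-leaf vertex (edges are identified with their
lower endpoints). -/
def IsFlow (c : Vtx → ℕ) (μ : Vtx → ℝ≥0∞) : Prop :=
  ∀ v : Vtx, IsVtx c v → v ≠ [] → c v ≠ 0 →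
    μ v = ∑ i ∈ Finset.range (c v), μ (v ++ [i])

/-- Total flow out of the root. -/
def flowMass (c : Vtx → ℕ) (μ : Vtx → ℝ≥0∞) : ℝ≥0∞ :=
  ∑ i ∈ Finset.range (c []), μ [i]

/-- An infinite ray from the root. -/
def IsRay (c : Vtx → ℕ) (y : ℕ → ℕ) : Prop :=
  ∀ n : ℕ, y n < c ((List.range n).map y)

/-- `V_μ(y) = Σ_{e ∈ y} (μ(e) R(e))^s` along an infinite ray. -/
def rayPot (μ R : Vtx → ℝ≥0∞) (s : ℝ) (y : ℕ → ℕ) : ℝ≥0∞ :=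
  ∑' n : ℕ, (μ ((List.range (n + 1)).map y) * R ((List.range (n + 1)).map y)) ^ s

/-- `V_μ` along the maximal path from the root to a leaf `ℓ`. -/
def leafPot (μ R : Vtx → ℝ≥0∞) (s : ℝ) (ℓ : Vtx) : ℝ≥0∞ :=
  ∑ k ∈ Finset.range ℓ.length, (μ (ℓ.take (k + 1)) * R (ℓ.take (k + 1))) ^ s

/-- `cap_p` of an infinite leafless tree. -/
def capInf (c : Vtx → ℕ) (R : Vtx → ℝ≥0∞) (p : ℝ) : ℝ≥0∞ :=
  sSup {m | ∃ μ : Vtx → ℝ≥0∞, IsFlow c μ ∧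
    (∀ y : ℕ → ℕ, IsRay c y → rayPot μ R (p - 1) y ≤ 1) ∧ m = flowMass c μ}

/-- `cap_p` of a finite tree. -/
def capFin (c : Vtx → ℕ) (R : Vtx → ℝ≥0∞) (p : ℝ) : ℝ≥0∞ :=
  sSup {m | ∃ μ : Vtx → ℝ≥0∞, IsFlow c μ ∧
    (∀ ℓ : Vtx, IsVtx c ℓ → c ℓ = 0 → leafPot μ R (p - 1) ℓ ≤ 1) ∧ m = flowMass c μ}

/-- The set of vertices at distance `n` from the root. -/
def lev (c : Vtx → ℕ) : ℕ → Finset Vtx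
  | 0 => {([] : Vtx)}
  | n + 1 => (lev c n).biUnion fun v => (Finset.range (c v)).image fun i => v ++ [i]

/-- The vertices of the truncated tree `T^(N)`. -/
def verts (c : Vtx → ℕ) (N : ℕ) : Finset Vtx := (Finset.range (N + 1)).biUnion (lev c)

/-- Spin configurations on `T^(N)`. -/
def Conf (c : Vtx → ℕ) (N : ℕ) := {v // v ∈ verts c N} → Bool

instance (c : Vtx → ℕ) (N : ℕ) : Fintype (Conf c N) := by unfold Conf; infer_instance

/-- The ±1 spin of a configuration at a vertex. -/
def spin (c : Vtx → ℕ) (N : ℕ) (σ : Conf c N) (w : Vtx) : ℝ :=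
  if h : w ∈ verts c N then (if σ ⟨w, h⟩ then 1 else -1) else 1

/-- The weight `W(η) = Π_{v → w} exp(β J_w η(v) η(w))` of a configuration on `T^(N)`. -/
def wt (c : Vtx → ℕ) (J : Vtx → ℝ) (β : ℝ) (N : ℕ) (σ : Conf c N) : ℝ :=
  ∏ w ∈ (Finset.range N).biUnion (fun n => lev c (n + 1)),
    Real.exp (β * J w * spin c N σ w.dropLast * spin c N σ w)

/-- `P^(N,+)(η(o) = +1)`: probability of a plus spin at the root under plus boundary
conditions at level `N`. -/
def plusProb (c : Vtx → ℕ) (J : Vtx → ℝ) (β : ℝ) (N : ℕ) : ℝ :=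
  (∑ σ : Conf c N, if (∀ x : {v // v ∈ verts c N}, x.1 ∈ lev c N → σ x = true)
      ∧ spin c N σ [] = 1 then wt c J β N σ else 0) /
  (∑ σ : Conf c N, if (∀ x : {v // v ∈ verts c N}, x.1 ∈ lev c N → σ x = true)
      then wt c J β N σ else 0)

/-- The log-likelihood ratio `log [P(η(root) = +1 | ξ) / P(η(root) = -1 | ξ)]` at the root of
the depth-`M` truncated tree with child counts `c`, interactions `J`, inverse temperature `β`
and boundary condition `ξ` imposed on the level-`M` vertices. -/
def condRatio (c : Vtx → ℕ) (J : Vtx → ℝ) (β : ℝ) (M : ℕ) (ξ : Vtx → Bool) : ℝ :=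
  Real.log
    ((∑ σ : Conf c M, if (∀ x : {v // v ∈ verts c M}, x.1 ∈ lev c M → σ x = ξ x.1)
        ∧ spin c M σ [] = 1 then wt c J β M σ else 0) /
     (∑ σ : Conf c M, if (∀ x : {v // v ∈ verts c M}, x.1 ∈ lev c M → σ x = ξ x.1)
        ∧ spin c M σ [] = -1 then wt c J β M σ else 0))

/-- The child-count function of the subtree `T(v)` rooted at `v`. -/
def subC (c : Vtx → ℕ) (v : Vtx) : Vtx → ℕ := fun w => c (v ++ w)

/-- The interaction strengths of the subtree `T(v)` rooted at `v`. -/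
def subJ (J : Vtx → ℝ) (v : Vtx) : Vtx → ℝ := fun w => J (v ++ w)

/-- The boundary configuration (on level-`M` vertices) induced by a configuration `σ`. -/
def bdOf (c : Vtx → ℕ) (M : ℕ) (σ : Conf c M) : Vtx → Bool :=
  fun w => if h : w ∈ verts c M then σ ⟨w, h⟩ else true

/-- `X_v^(N)`: the log-likelihood ratio at the root of the subtree, as a function of the
boundary of the configuration `σ`. -/
def Xof (c : Vtx → ℕ) (J : Vtx → ℝ) (β : ℝ) (M : ℕ) (σ : Conf c M) : ℝ :=
  condRatio c J β M (bdOf c M σ)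

namespace Stmt14Aux

variable (c : Vtx → ℕ) (J : Vtx → ℝ) (β : ℝ) (M : ℕ)

lemma length_of_mem_lev : ∀ n, ∀ w ∈ lev c n, w.length = n := by
  intro n
  induction n with
  | zero => intro w hw; simp [lev] at hw; simp [hw]
  | succ n ih =>
    intro w hw
    simp only [lev, Finset.mem_biUnion, Finset.mem_image, Finset.mem_range] at hw
    obtain ⟨v, hv, i, hi, rfl⟩ := hw
    simp [ih v hv]

lemma mem_lev_succ {n : ℕ} {w : Vtx} (hw : w ∈ lev c (n + 1)) :
    ∃ u ∈ lev c n, ∃ i, w = u ++ [i] := by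
  simp only [lev, Finset.mem_biUnion, Finset.mem_image, Finset.mem_range] at hw
  obtain ⟨v, hv, i, hi, rfl⟩ := hw
  exact ⟨v, hv, i, rfl⟩

lemma lev_subset_verts {n : ℕ} (hn : n ≤ M) {w : Vtx} (hw : w ∈ lev c n) :
    w ∈ verts c M := by
  simp only [verts, Finset.mem_biUnion, Finset.mem_range]
  exact ⟨n, by omega, hw⟩

lemma root_mem_verts : [] ∈ verts c M :=
  lev_subset_verts c M (Nat.zero_le M) (by simp [lev])

lemma root_not_mem_lev (hM : 1 ≤ M) : ([] : Vtx) ∉ lev c M := fun h => by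
  have := length_of_mem_lev c M [] h; simp at this; omega

/-- Global spin flip. -/
def flip (σ : Conf c M) : Conf c M := fun x => !(σ x)

lemma flip_bijective : Function.Bijective (flip c M) :=
  Function.Involutive.bijective (fun σ => by funext x; simp [flip])

lemma spin_flip {w : Vtx} (hw : w ∈ verts c M) (σ : Conf c M) :
    spin c M (flip c M σ) w = -spin c M σ w := by
  simp only [spin, dif_pos hw, flip]
  rcases Bool.eq_false_or_eq_true (σ ⟨w, hw⟩) with h | h <;> simp [h]

lemma wt_flip (σ : Conf c M) : wt c J β M (flip c M σ) = wt c J β M σ := by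
  unfold wt
  refine Finset.prod_congr rfl fun w hw => ?_
  simp only [Finset.mem_biUnion, Finset.mem_range] at hw
  obtain ⟨n, hn, hw⟩ := hw
  have hwv : w ∈ verts c M := lev_subset_verts c M (by omega) hw
  obtain ⟨u, hu, i, rfl⟩ := mem_lev_succ c hw
  have hdv : (u ++ [i]).dropLast ∈ verts c M := by
    rw [List.dropLast_concat]; exact lev_subset_verts c M (by omega) hu
  rw [spin_flip c M hwv, spin_flip c M hdv]
  exact congrArg Real.exp (by ring)

lemma spin_root (σ : Conf c M) :
    spin c M σ [] = if σ ⟨[], root_mem_verts c M⟩ then 1 else -1 :=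
  dif_pos _

lemma spin_root_eq_one_or (σ : Conf c M) :
    spin c M σ [] = 1 ∨ spin c M σ [] = -1 := by
  rw [spin_root]; split <;> simp

end Stmt14Aux
namespace Stmt14Aux

variable (c : Vtx → ℕ) (J : Vtx → ℝ) (β : ℝ) (M : ℕ)

/-- Sum of weights over configurations agreeing with `ξ` on the boundary, root spin `t`. -/
def bsum (ξ : Vtx → Bool) (t : ℝ) : ℝ :=
  ∑ σ : Conf c M, if (∀ x : {v // v ∈ verts c M}, x.1 ∈ lev c M → σ x = ξ x.1)
      ∧ spin c M σ [] = t then wt c J β M σ else 0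

lemma condRatio_eq (ξ : Vtx → Bool) :
    condRatio c J β M ξ = Real.log (bsum c J β M ξ 1 / bsum c J β M ξ (-1)) := rfl

lemma bdOf_apply (σ : Conf c M) (x : {v // v ∈ verts c M}) :
    bdOf c M σ x.1 = σ x := by
  simp [bdOf, x.2]

lemma bsum_congr {ξ ξ' : Vtx → Bool} (h : ∀ w ∈ lev c M, ξ w = ξ' w) (t : ℝ) :
    bsum c J β M ξ t = bsum c J β M ξ' t := by
  unfold bsum
  refine Finset.sum_congr rfl fun σ _ => ?_
  refine if_congr (and_congr_left' ?_) rfl rfl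
  exact forall_congr' fun x => imp_congr_right fun hx => by rw [h x.1 hx]

lemma condRatio_congr {ξ ξ' : Vtx → Bool} (h : ∀ w ∈ lev c M, ξ w = ξ' w) :
    condRatio c J β M ξ = condRatio c J β M ξ' := by
  rw [condRatio_eq, condRatio_eq, bsum_congr c J β M h, bsum_congr c J β M h]

lemma bsum_bdOf_flip (σ : Conf c M) (t : ℝ) :
    bsum c J β M (bdOf c M (flip c M σ)) t = bsum c J β M (bdOf c M σ) (-t) := by
  unfold bsum
  refine Fintype.sum_bijective (flip c M) (flip_bijective c M) _ _ fun σ' => ?_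
  refine if_congr ?_ (wt_flip c J β M σ').symm rfl
  constructor
  · rintro ⟨h1, h2⟩
    refine ⟨fun x hx => ?_, ?_⟩
    · have := h1 x hx
      rw [bdOf_apply] at this ⊢
      simpa [flip] using congrArg (!·) this
    · rw [spin_flip c M (root_mem_verts c M) σ', h2]
  · rintro ⟨h1, h2⟩
    refine ⟨fun x hx => ?_, ?_⟩
    · have := h1 x hx
      rw [bdOf_apply] at this ⊢
      simpa [flip] using congrArg (!·) this
    · rw [spin_flip c M (root_mem_verts c M) σ'] at h2
      linarith
  -- orientation may need fixing

lemma Xof_flip (σ : Conf c M) :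
    Xof c J β M (flip c M σ) = -Xof c J β M σ := by
  unfold Xof
  rw [condRatio_eq, condRatio_eq, bsum_bdOf_flip, bsum_bdOf_flip, neg_neg,
    ← inv_div, Real.log_inv]

end Stmt14Aux
namespace Stmt14Aux

variable (c : Vtx → ℕ) (J : Vtx → ℝ) (β : ℝ) (M : ℕ)

lemma wt_pos (σ : Conf c M) : 0 < wt c J β M σ :=
  Finset.prod_pos fun _ _ => Real.exp_pos _

/-- Projection of a configuration to its boundary values (non-boundary spins set to `true`). -/
def proj (σ : Conf c M) : Conf c M := fun x => if x.1 ∈ lev c M then σ x else true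

lemma proj_proj (σ : Conf c M) : proj c M (proj c M σ) = proj c M σ := by
  funext x; by_cases h : x.1 ∈ lev c M <;> simp [proj, h]

lemma proj_eq_iff (σ' σ : Conf c M) :
    proj c M σ' = proj c M σ ↔ ∀ x : {v // v ∈ verts c M}, x.1 ∈ lev c M → σ' x = σ x := by
  rw [show proj c M σ' = proj c M σ ↔ ∀ x, proj c M σ' x = proj c M σ x from funext_iff]
  constructor
  · intro h x hx
    have := h x; simpa [proj, hx] using this
  · intro h x
    by_cases hx : x.1 ∈ lev c M
    · simpa [proj, hx] using h x hx
    · simp [proj, hx]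

lemma Xof_proj (σ : Conf c M) : Xof c J β M (proj c M σ) = Xof c J β M σ := by
  unfold Xof
  refine condRatio_congr c J β M fun w hw => ?_
  have hwv : w ∈ verts c M := lev_subset_verts c M le_rfl hw
  simp only [bdOf, dif_pos hwv]
  simp [proj, hw]


end Stmt14Aux
namespace Stmt14Aux
variable (c : Vtx → ℕ) (J : Vtx → ℝ) (β : ℝ) (M : ℕ)
set_option maxHeartbeats 2000000 in
lemma bsum_eq_fiber_sum {τ : Conf c M} (hτ : proj c M τ = τ) (t : ℝ) :
    bsum c J β M (bdOf c M τ) t =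
      ∑ σ ∈ Finset.univ.filter (fun σ => proj c M σ = τ),
        (if spin c M σ [] = t then wt c J β M σ else 0) := by
  rw [Finset.sum_filter]
  unfold bsum
  refine Finset.sum_congr rfl fun σ _ => ?_
  have hagree : (∀ x : {v // v ∈ verts c M}, x.1 ∈ lev c M → σ x = bdOf c M τ x.1)
      ↔ proj c M σ = τ := by
    conv_rhs => rw [← hτ]
    rw [proj_eq_iff]
    exact forall_congr' fun x => imp_congr_right fun hx => by rw [bdOf_apply]
  rw [← hagree]
  split_ifs with h1 h2 h3 <;> tauto
end Stmt14Aux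
namespace Stmt14Aux
variable (c : Vtx → ℕ) (J : Vtx → ℝ) (β : ℝ) (M : ℕ)

lemma root_spin_proj_mem (hM : 1 ≤ M) {τ : Conf c M} (hτ : proj c M τ = τ) (b : Bool) :
    ∃ σ : Conf c M, proj c M σ = τ ∧
      spin c M σ [] = (if b then 1 else -1) := by
  refine ⟨fun x => if x.1 ∈ lev c M then τ x else b, ?_, ?_⟩
  · conv_rhs => rw [← hτ]
    funext x
    by_cases hx : x.1 ∈ lev c M <;> simp [proj, hx]
  · refine (spin_root c M _).trans ?_
    simp [root_not_mem_lev c M hM]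
end Stmt14Aux
namespace Stmt14Aux

lemma tanh_log_div {a b : ℝ} (ha : 0 < a) (hb : 0 < b) :
    Real.tanh (Real.log (a / b) / 2) = (a - b) / (a + b) := by
  set u := Real.exp (Real.log (a / b) / 2) with hu
  have hu0 : 0 < u := Real.exp_pos _
  have hu2 : u * u = a / b := by
    rw [hu, ← Real.exp_add, add_halves, Real.exp_log (div_pos ha hb)]
  have hexp : Real.exp (-(Real.log (a / b) / 2)) = u⁻¹ := by
    rw [Real.exp_neg, hu]
  rw [Real.tanh_eq_sinh_div_cosh, Real.sinh_eq, Real.cosh_eq, hexp, ← hu]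
  have hab : a + b ≠ 0 := by positivity
  have h1 : u + u⁻¹ ≠ 0 := by positivity
  have h : u * u * b = a := by rw [hu2]; field_simp
  field_simp
  linear_combination 2 * h

end Stmt14Aux
namespace Stmt14Aux

variable (c : Vtx → ℕ) (J : Vtx → ℝ) (β : ℝ) (M : ℕ)

set_option maxHeartbeats 2000000 in
lemma fiber_sum_pos (hM : 1 ≤ M) {τ : Conf c M} (hτ : proj c M τ = τ) (b : Bool) :
    0 < ∑ σ ∈ Finset.univ.filter (fun σ => proj c M σ = τ),
        (if spin c M σ [] = (if b then (1:ℝ) else -1) then wt c J β M σ else 0) := by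
  obtain ⟨σ₁, h1, h2⟩ := root_spin_proj_mem c M hM hτ b
  refine Finset.sum_pos'
    (fun σ _ => by split_ifs <;> first | exact (wt_pos c J β M σ).le | exact le_rfl) ⟨σ₁, ?_, ?_⟩
  · simp [Finset.mem_filter, h1]
  · rw [if_pos h2]; exact wt_pos c J β M σ₁

set_option maxHeartbeats 4000000 in
lemma fiber_eq (hM : 1 ≤ M) (φ : ℝ → ℝ) (τ : Conf c M) :
    ∑ σ ∈ Finset.univ.filter (fun σ => proj c M σ = τ),
      wt c J β M σ * (φ (Xof c J β M σ) * Real.tanh (Xof c J β M σ / 2)) =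
    ∑ σ ∈ Finset.univ.filter (fun σ => proj c M σ = τ),
      spin c M σ [] * (wt c J β M σ * φ (Xof c J β M σ)) := by
  rcases Finset.eq_empty_or_nonempty
      (Finset.univ.filter (fun σ => proj c M σ = τ)) with he | ⟨σ₀, hσ₀⟩
  · rw [he]; simp
  · have hτ : proj c M τ = τ := by
      have h := (Finset.mem_filter.1 hσ₀).2
      rw [← h, proj_proj]
    have hXσ : ∀ σ ∈ Finset.univ.filter (fun σ => proj c M σ = τ),
        Xof c J β M σ = Xof c J β M τ := by
      intro σ hσ
      rw [← Xof_proj c J β M σ, (Finset.mem_filter.1 hσ).2]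
    set a := ∑ σ ∈ Finset.univ.filter (fun σ => proj c M σ = τ),
        (if spin c M σ [] = (1:ℝ) then wt c J β M σ else 0) with hadef
    set b := ∑ σ ∈ Finset.univ.filter (fun σ => proj c M σ = τ),
        (if spin c M σ [] = (-1:ℝ) then wt c J β M σ else 0) with hbdef
    have ha : 0 < a := by simpa using fiber_sum_pos c J β M hM hτ true
    have hb : 0 < b := by simpa using fiber_sum_pos c J β M hM hτ false
    have hX : Xof c J β M τ = Real.log (a / b) := by
      rw [Xof, condRatio_eq, bsum_eq_fiber_sum c J β M hτ 1,
        bsum_eq_fiber_sum c J β M hτ (-1)]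
    have hsum : ∑ σ ∈ Finset.univ.filter (fun σ => proj c M σ = τ),
        wt c J β M σ = a + b := by
      rw [hadef, hbdef, ← Finset.sum_add_distrib]
      refine Finset.sum_congr rfl fun σ _ => ?_
      rcases spin_root_eq_one_or c M σ with h | h <;>
        · rw [h]; norm_num
    have hdiff : ∑ σ ∈ Finset.univ.filter (fun σ => proj c M σ = τ),
        spin c M σ [] * wt c J β M σ = a - b := by
      rw [hadef, hbdef, ← Finset.sum_sub_distrib]
      refine Finset.sum_congr rfl fun σ _ => ?_
      rcases spin_root_eq_one_or c M σ with h | h <;>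
        · rw [h]; norm_num
    calc ∑ σ ∈ Finset.univ.filter (fun σ => proj c M σ = τ),
          wt c J β M σ * (φ (Xof c J β M σ) * Real.tanh (Xof c J β M σ / 2))
        = ∑ σ ∈ Finset.univ.filter (fun σ => proj c M σ = τ),
          wt c J β M σ * (φ (Xof c J β M τ) * Real.tanh (Xof c J β M τ / 2)) := by
          refine Finset.sum_congr rfl fun σ hσ => by rw [hXσ σ hσ]
      _ = (a + b) * (φ (Xof c J β M τ) * Real.tanh (Xof c J β M τ / 2)) := by
          rw [← hsum, ← Finset.sum_mul]
      _ = φ (Xof c J β M τ) * (a - b) := by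
          rw [hX, tanh_log_div ha hb]
          have : a + b ≠ 0 := by positivity
          field_simp
      _ = ∑ σ ∈ Finset.univ.filter (fun σ => proj c M σ = τ),
          spin c M σ [] * (wt c J β M σ * φ (Xof c J β M τ)) := by
          rw [← hdiff, Finset.mul_sum]
          refine Finset.sum_congr rfl fun σ _ => by ring
      _ = _ := by
          refine Finset.sum_congr rfl fun σ hσ => by rw [hXσ σ hσ]

end Stmt14Aux
namespace Stmt14Aux

set_option maxHeartbeats 4000000 in
theorem key (c : Vtx → ℕ) (J : Vtx → ℝ) (β : ℝ) (M : ℕ) (hM : 1 ≤ M)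
    (φ : ℝ → ℝ) (hodd : ∀ x : ℝ, φ (-x) = -φ x) :
    (∑ σ : Conf c M, if spin c M σ [] = 1 then wt c J β M σ * φ (Xof c J β M σ) else 0) /
      (∑ σ : Conf c M, if spin c M σ [] = 1 then wt c J β M σ else 0) =
    (∑ σ : Conf c M, wt c J β M σ * (φ |Xof c J β M σ| * Real.tanh (|Xof c J β M σ| / 2))) /
      (∑ σ : Conf c M, wt c J β M σ) := by
  have hflip : ∀ f : Conf c M → ℝ,
      ∑ σ : Conf c M, f (flip c M σ) = ∑ σ : Conf c M, f σ :=
    fun f => Fintype.sum_bijective (flip c M) (flip_bijective c M) _ _ fun σ => rfl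
  have hfw : ∀ f : Conf c M → ℝ, ∑ σ : Conf c M, f σ =
      ∑ τ : Conf c M, ∑ σ ∈ Finset.univ.filter (fun σ => proj c M σ = τ), f σ :=
    fun f => (Finset.sum_fiberwise_of_maps_to
      (fun i _ => Finset.mem_univ (proj c M i)) f).symm
  have hneg1 : ∀ s : ℝ, (-s = -1 ↔ s = 1) := fun s => by constructor <;> intro <;> linarith
  -- denominator
  have hden : (∑ σ : Conf c M, wt c J β M σ)
      = 2 * ∑ σ : Conf c M, (if spin c M σ [] = 1 then wt c J β M σ else 0) := by
    have h1 : (∑ σ : Conf c M, wt c J β M σ)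
        = (∑ σ : Conf c M, (if spin c M σ [] = 1 then wt c J β M σ else 0))
          + ∑ σ : Conf c M, (if spin c M σ [] = -1 then wt c J β M σ else 0) := by
      rw [← Finset.sum_add_distrib]
      refine Finset.sum_congr rfl fun σ _ => ?_
      rcases spin_root_eq_one_or c M σ with h | h <;> rw [h] <;> norm_num
    have h2 : (∑ σ : Conf c M, (if spin c M σ [] = -1 then wt c J β M σ else 0))
        = ∑ σ : Conf c M, (if spin c M σ [] = 1 then wt c J β M σ else 0) := by
      rw [← hflip (fun σ => if spin c M σ [] = -1 then wt c J β M σ else 0)]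
      refine Finset.sum_congr rfl fun σ _ => ?_
      simp only [spin_flip c M (root_mem_verts c M), wt_flip c J β M]
      rw [if_congr (hneg1 _) rfl rfl]
    rw [h1, h2]; ring
  -- numerator
  have heven : ∀ σ : Conf c M,
      wt c J β M σ * (φ |Xof c J β M σ| * Real.tanh (|Xof c J β M σ| / 2))
        = wt c J β M σ * (φ (Xof c J β M σ) * Real.tanh (Xof c J β M σ / 2)) := by
    intro σ
    rcases abs_cases (Xof c J β M σ) with ⟨h, _⟩ | ⟨h, _⟩
    · rw [h]
    · rw [h, hodd, neg_div, Real.tanh_neg]; ring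
  have hnum : (∑ σ : Conf c M,
        wt c J β M σ * (φ |Xof c J β M σ| * Real.tanh (|Xof c J β M σ| / 2)))
      = 2 * ∑ σ : Conf c M,
          (if spin c M σ [] = 1 then wt c J β M σ * φ (Xof c J β M σ) else 0) := by
    have e1 : (∑ σ : Conf c M,
          wt c J β M σ * (φ |Xof c J β M σ| * Real.tanh (|Xof c J β M σ| / 2)))
        = ∑ σ : Conf c M, wt c J β M σ * (φ (Xof c J β M σ) * Real.tanh (Xof c J β M σ / 2)) :=
      Finset.sum_congr rfl fun σ _ => heven σ
    have e2 : (∑ σ : Conf c M, wt c J β M σ * (φ (Xof c J β M σ) * Real.tanh (Xof c J β M σ / 2)))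
        = ∑ σ : Conf c M, spin c M σ [] * (wt c J β M σ * φ (Xof c J β M σ)) := by
      rw [hfw (fun σ => wt c J β M σ * (φ (Xof c J β M σ) * Real.tanh (Xof c J β M σ / 2))),
        hfw (fun σ => spin c M σ [] * (wt c J β M σ * φ (Xof c J β M σ)))]
      exact Finset.sum_congr rfl fun τ _ => fiber_eq c J β M hM φ τ
    have e3 : (∑ σ : Conf c M, spin c M σ [] * (wt c J β M σ * φ (Xof c J β M σ)))
        = (∑ σ : Conf c M, (if spin c M σ [] = 1 then wt c J β M σ * φ (Xof c J β M σ) else 0))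
          - ∑ σ : Conf c M,
              (if spin c M σ [] = -1 then wt c J β M σ * φ (Xof c J β M σ) else 0) := by
      rw [← Finset.sum_sub_distrib]
      refine Finset.sum_congr rfl fun σ _ => ?_
      rcases spin_root_eq_one_or c M σ with h | h <;> rw [h] <;> norm_num
    have e4 : (∑ σ : Conf c M,
          (if spin c M σ [] = -1 then wt c J β M σ * φ (Xof c J β M σ) else 0))
        = -∑ σ : Conf c M,
            (if spin c M σ [] = 1 then wt c J β M σ * φ (Xof c J β M σ) else 0) := by
      rw [← hflip (fun σ => if spin c M σ [] = -1 then wt c J β M σ * φ (Xof c J β M σ) else 0),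
        ← Finset.sum_neg_distrib]
      refine Finset.sum_congr rfl fun σ _ => ?_
      simp only [spin_flip c M (root_mem_verts c M), wt_flip c J β M, Xof_flip c J β M, hodd]
      rw [if_congr (hneg1 _) rfl rfl]
      split_ifs <;> ring
    rw [e1, e2, e3, e4]; ring
  rw [hnum, hden, mul_div_mul_left _ _ (by norm_num : (2:ℝ) ≠ 0)]

end Stmt14Aux
theorem stmt14 (c : Vtx → ℕ) (J : Vtx → ℝ) (β : ℝ) (hβ : 0 < β)
    (hJ : ∀ w, IsVtx c w → w ≠ [] → 0 < J w)
    (N : ℕ) (v : Vtx) (hv : IsVtx c v) (hvN : v.length < N)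
    (φ : ℝ → ℝ) (hodd : ∀ x : ℝ, φ (-x) = -φ x) :
    (∑ σ : Conf (subC c v) (N - v.length),
        if spin (subC c v) (N - v.length) σ [] = 1 then
          wt (subC c v) (subJ J v) β (N - v.length) σ *
            φ (Xof (subC c v) (subJ J v) β (N - v.length) σ)
        else 0) /
      (∑ σ : Conf (subC c v) (N - v.length),
        if spin (subC c v) (N - v.length) σ [] = 1 then
          wt (subC c v) (subJ J v) β (N - v.length) σ else 0) =
    (∑ σ : Conf (subC c v) (N - v.length),
        wt (subC c v) (subJ J v) β (N - v.length) σ *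
          (φ |Xof (subC c v) (subJ J v) β (N - v.length) σ| *
            Real.tanh (|Xof (subC c v) (subJ J v) β (N - v.length) σ| / 2))) /
      (∑ σ : Conf (subC c v) (N - v.length),
        wt (subC c v) (subJ J v) β (N - v.length) σ) := by
  exact Stmt14Aux.key (subC c v) (subJ J v) β (N - v.length) (by omega) φ hodd
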